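/- Let F be a field and R = F[x_1, ..., x_n]. Suppose x^v − g·x^w and x^b − h·x^c are binomials with g, h units in F, gcd(x^v, x^w) = 1 = gcd(x^b, x^c), and x^v > x^w and x^b > x^c in the graded reverse lexicographic ordering. If the ideal (x^v − g·x^w, x^b − h·x^c) equals R, then w = 0, c = 0, and there exists a positive rational number l such that v_i = l·b_i for all i. -/

import Mathlib

set_option maxHeartbeats 1000000


open MvPolynomial

/-- The graded reverse lexicographic order on exponent vectors:
`a < b` iff `a` has smaller total degree, or the degrees agree and at the last index
where `a` and `b` differ, `a` has the larger exponent. -/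
def grevlexLt {n : ℕ} (a b : Fin n →₀ ℕ) : Prop :=
  (∑ i, a i) < (∑ i, b i) ∨
    ((∑ i, a i) = (∑ i, b i) ∧ ∃ i, b i < a i ∧ ∀ j, i < j → a j = b j)


lemma zpow_sum_aux {G : Type*} [CommGroup G] {ι : Type*} (a : G) (s : Finset ι) (f : ι → ℤ) :
    a ^ (∑ i ∈ s, f i) = ∏ i ∈ s, a ^ f i := by
  classical
  induction s using Finset.induction_on with
  | empty => simp
  | insert _ _ h ih => rw [Finset.sum_insert h, Finset.prod_insert h, zpow_add, ih]

lemma span_ne_top_aux {F K : Type*} [Field F] [CommRing K] [Nontrivial K] [Algebra F K] {n : ℕ}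
    (t : Fin n → K) (f₁ f₂ : MvPolynomial (Fin n) F)
    (h1 : aeval t f₁ = 0) (h2 : aeval t f₂ = 0) : Ideal.span {f₁, f₂} ≠ ⊤ := by
  intro hR
  have hle : Ideal.span {f₁, f₂} ≤ RingHom.ker (aeval t : MvPolynomial (Fin n) F →ₐ[F] K) := by
    rw [Ideal.span_le]
    intro x hx
    simp only [Set.mem_insert_iff, Set.mem_singleton_iff] at hx
    rcases hx with rfl | rfl <;> simpa [RingHom.mem_ker]
  have h1' : (1 : MvPolynomial (Fin n) F) ∈ RingHom.ker (aeval t : MvPolynomial (Fin n) F →ₐ[F] K) :=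
    hle (hR ▸ Submodule.mem_top)
  simp [RingHom.mem_ker] at h1'

lemma exists_dual_aux {n : ℕ} (U D : Fin n → ℚ)
    (hInd : ∀ s t : ℚ, (∀ i, s * U i + t * D i = 0) → s = 0 ∧ t = 0) :
    ∃ p q : Fin n → ℚ, (∑ i, U i * p i = 1) ∧ (∑ i, U i * q i = 0) ∧
      (∑ i, D i * p i = 0) ∧ (∑ i, D i * q i = 1) := by
  classical
  let φ : (Fin 2 → ℚ) →ₗ[ℚ] (Fin n → ℚ) :=
    { toFun := fun x => fun i => x 0 * U i + x 1 * D i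
      map_add' := by intro x y; funext i; simp only [Pi.add_apply]; ring
      map_smul' := by intro r x; funext i; simp only [Pi.smul_apply, smul_eq_mul,
        RingHom.id_apply]; ring }
  have hker : LinearMap.ker φ = ⊥ := by
    rw [LinearMap.ker_eq_bot']
    intro x hx
    have hx' : ∀ i, x 0 * U i + x 1 * D i = 0 := fun i => congrFun hx i
    obtain ⟨h0, h1⟩ := hInd _ _ hx'
    funext j
    fin_cases j <;> simpa
  obtain ⟨r, hr⟩ := LinearMap.exists_leftInverse_of_injective φ hker
  have hrapp : ∀ x : Fin 2 → ℚ, r (φ x) = x := fun x => by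
    have := congrArg (fun (f : (Fin 2 → ℚ) →ₗ[ℚ] (Fin 2 → ℚ)) => f x) hr
    simpa using this
  have hφ0 : φ (Pi.single 0 1) = U := by
    funext i
    simp [φ, Pi.single_apply]
  have hφ1 : φ (Pi.single 1 1) = D := by
    funext i
    simp [φ, Pi.single_apply]
  have hrU : r U = Pi.single 0 1 := by rw [← hφ0, hrapp]
  have hrD : r D = Pi.single 1 1 := by rw [← hφ1, hrapp]
  have main : ∀ (X : Fin n → ℚ) (j : Fin 2), (∑ i, X i * r (Pi.single i 1) j) = r X j := by
    intro X j
    have key : (∑ i, X i • r (Pi.single i (1:ℚ))) = r X := by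
      calc ∑ i, X i • r (Pi.single i (1:ℚ))
          = ∑ i, r (X i • (Pi.single i (1:ℚ) : Fin n → ℚ)) :=
            Finset.sum_congr rfl (fun i _ => (map_smul r _ _).symm)
        _ = r (∑ i, X i • (Pi.single i (1:ℚ) : Fin n → ℚ)) := (map_sum r _ _).symm
        _ = r X := by
            congr 1
            rw [show (∑ i, X i • (Pi.single i (1:ℚ) : Fin n → ℚ)) = ∑ i, Pi.single i (X i) from
              Finset.sum_congr rfl (fun i _ => by rw [← Pi.single_smul, smul_eq_mul, mul_one]),
              Finset.univ_sum_single]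
    calc ∑ i, X i * r (Pi.single i 1) j
        = (∑ i, X i • r (Pi.single i (1:ℚ))) j := by
          rw [Finset.sum_apply]
          exact Finset.sum_congr rfl fun i _ => by simp
      _ = r X j := congrFun key j
  exact ⟨fun i => r (Pi.single i 1) 0, fun i => r (Pi.single i 1) 1,
    by rw [main U 0, hrU]; simp,
    by rw [main U 1, hrU]; simp [Pi.single_apply],
    by rw [main D 0, hrD]; simp [Pi.single_apply],
    by rw [main D 1, hrD]; simp⟩

lemma indep_case_aux {F : Type*} [Field F] {n : ℕ} (g h : F) (hg0 : g ≠ 0) (hh0 : h ≠ 0)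
    (v w b c : Fin n →₀ ℕ) (p q : Fin n → ℚ)
    (h1 : ∑ i, ((v i : ℚ) - w i) * p i = 1)
    (h2 : ∑ i, ((v i : ℚ) - w i) * q i = 0)
    (h3 : ∑ i, ((b i : ℚ) - c i) * p i = 0)
    (h4 : ∑ i, ((b i : ℚ) - c i) * q i = 1) :
    Ideal.span {(monomial v (1 : F)) - MvPolynomial.C g * monomial w 1,
        (monomial b (1 : F)) - MvPolynomial.C h * monomial c 1} ≠ ⊤ := by
  classical
  set K := AlgebraicClosure F with hK
  have hgK : algebraMap F K g ≠ 0 := fun hc => hg0 ((algebraMap F K).injective (by simpa using hc))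
  have hhK : algebraMap F K h ≠ 0 := fun hc => hh0 ((algebraMap F K).injective (by simpa using hc))
  -- common denominator
  set N : ℕ := (∏ i, (p i).den) * (∏ i, (q i).den) with hN
  have hNpos : 0 < N := mul_pos (Finset.prod_pos fun i _ => (p i).pos) (Finset.prod_pos fun i _ => (q i).pos)
  have key : ∀ r : ℚ, r.den ∣ N → ∃ z : ℤ, (z : ℚ) = (N : ℚ) * r := by
    intro r hd
    obtain ⟨M, hM⟩ := hd
    refine ⟨r.num * M, ?_⟩
    have h0 : (r.num : ℚ) = r * r.den := by
      have hd : ((r.den : ℚ)) ≠ 0 := by exact_mod_cast r.den_ne_zero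
      exact (div_eq_iff hd).mp (Rat.num_div_den r)
    push_cast
    rw [h0, hM]
    push_cast
    ring
  have hpdvd : ∀ i, (p i).den ∣ N := fun i =>
    Dvd.dvd.mul_right (Finset.dvd_prod_of_mem _ (Finset.mem_univ i)) _
  have hqdvd : ∀ i, (q i).den ∣ N := fun i =>
    Dvd.dvd.mul_left (Finset.dvd_prod_of_mem _ (Finset.mem_univ i)) _
  choose P hP using fun i => key (p i) (hpdvd i)
  choose Q hQ using fun i => key (q i) (hqdvd i)
  -- integer identities
  have castid : ∀ (e f : Fin n →₀ ℕ) (Z : Fin n → ℤ) (z : Fin n → ℚ) (S : ℚ),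
      (∀ i, (Z i : ℚ) = (N:ℚ) * z i) → (∑ i, ((e i : ℚ) - f i) * z i = S) →
      ((∑ i, ((e i : ℤ) - f i) * Z i : ℤ) : ℚ) = (N : ℚ) * S := by
    intro e f Z z S hZ hsum
    push_cast
    rw [show (∑ i, (((e i:ℚ)) - (f i:ℚ)) * (Z i : ℚ)) = ∑ i, ((e i:ℚ) - f i) * ((N:ℚ) * z i) from
      Finset.sum_congr rfl fun i _ => by rw [hZ i]]
    rw [show (∑ i, ((e i:ℚ) - f i) * ((N:ℚ) * z i)) = (N:ℚ) * ∑ i, ((e i:ℚ) - f i) * z i from by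
      rw [Finset.mul_sum]; exact Finset.sum_congr rfl fun i _ => by ring]
    rw [hsum]
  have A1 : (∑ i, ((v i : ℤ) - w i) * P i) = (N : ℤ) := by
    have := castid v w P p 1 hP h1
    rw [mul_one] at this
    exact_mod_cast this
  have A2 : (∑ i, ((v i : ℤ) - w i) * Q i) = 0 := by
    have := castid v w Q q 0 hQ h2
    rw [mul_zero] at this
    exact_mod_cast this
  have A3 : (∑ i, ((b i : ℤ) - c i) * P i) = 0 := by
    have := castid b c P p 0 hP h3
    rw [mul_zero] at this
    exact_mod_cast this
  have A4 : (∑ i, ((b i : ℤ) - c i) * Q i) = (N : ℤ) := by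
    have := castid b c Q q 1 hQ h4
    rw [mul_one] at this
    exact_mod_cast this
  -- roots
  obtain ⟨G, hG⟩ := IsAlgClosed.exists_pow_nat_eq (algebraMap F K g) hNpos
  obtain ⟨H, hH⟩ := IsAlgClosed.exists_pow_nat_eq (algebraMap F K h) hNpos
  have hGne : G ≠ 0 := fun hc => hgK (by rw [← hG, hc, zero_pow hNpos.ne'])
  have hHne : H ≠ 0 := fun hc => hhK (by rw [← hH, hc, zero_pow hNpos.ne'])
  set Gu : Kˣ := Units.mk0 G hGne with hGu
  set Hu : Kˣ := Units.mk0 H hHne with hHu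
  set gu : Kˣ := Units.mk0 (algebraMap F K g) hgK with hgu
  set hu : Kˣ := Units.mk0 (algebraMap F K h) hhK with hhu
  have hGN : Gu ^ (N:ℤ) = gu := by
    ext
    push_cast
    simp [hGu, hgu, hG]
  have hHN : Hu ^ (N:ℤ) = hu := by
    ext
    push_cast
    simp [hHu, hhu, hH]
  set tu : Fin n → Kˣ := fun i => Gu ^ P i * Hu ^ Q i with htu
  have key2 : ∀ (e f : Fin n →₀ ℕ) (uKu : Kˣ),
      (Gu ^ (∑ i, ((e i:ℤ) - f i) * P i) * Hu ^ (∑ i, ((e i:ℤ) - f i) * Q i) = uKu) →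
      (∏ i, tu i ^ (e i : ℕ)) = uKu * ∏ i, tu i ^ (f i : ℕ) := by
    intro e f uKu hueq
    have step : ∏ i, tu i ^ ((e i:ℤ) - f i) = uKu := by
      calc ∏ i, tu i ^ ((e i:ℤ) - f i)
          = ∏ i, (Gu ^ (P i * ((e i:ℤ) - f i)) * Hu ^ (Q i * ((e i:ℤ) - f i))) := by
            refine Finset.prod_congr rfl fun i _ => ?_
            rw [htu]
            rw [mul_zpow, zpow_mul, zpow_mul]
        _ = (∏ i, Gu ^ (P i * ((e i:ℤ) - f i))) * ∏ i, Hu ^ (Q i * ((e i:ℤ) - f i)) :=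
            Finset.prod_mul_distrib
        _ = Gu ^ (∑ i, P i * ((e i:ℤ) - f i)) * Hu ^ (∑ i, Q i * ((e i:ℤ) - f i)) := by
            rw [zpow_sum_aux, zpow_sum_aux]
        _ = uKu := by
            rw [show (∑ i, P i * ((e i:ℤ) - f i)) = ∑ i, ((e i:ℤ) - f i) * P i from
              Finset.sum_congr rfl fun i _ => by ring]
            rw [show (∑ i, Q i * ((e i:ℤ) - f i)) = ∑ i, ((e i:ℤ) - f i) * Q i from
              Finset.sum_congr rfl fun i _ => by ring]
            exact hueq
    have main : ∏ i, tu i ^ (e i : ℤ) = uKu * ∏ i, tu i ^ (f i : ℤ) := by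
      calc ∏ i, tu i ^ (e i : ℤ)
          = ∏ i, (tu i ^ ((e i:ℤ) - f i) * tu i ^ (f i : ℤ)) := by
            refine Finset.prod_congr rfl fun i _ => ?_
            rw [← zpow_add, sub_add_cancel]
        _ = (∏ i, tu i ^ ((e i:ℤ) - f i)) * ∏ i, tu i ^ (f i : ℤ) := Finset.prod_mul_distrib
        _ = uKu * ∏ i, tu i ^ (f i : ℤ) := by rw [step]
    simpa [zpow_natCast] using main
  have hveq := key2 v w gu (by rw [A1, A2]; simp [hGN])
  have hbeq := key2 b c hu (by rw [A3, A4]; simp [hHN])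
  -- descend to K
  set t : Fin n → K := fun i => ((tu i : K)) with ht
  have hveqK : (∏ i, t i ^ (v i : ℕ)) = algebraMap F K g * ∏ i, t i ^ (w i : ℕ) := by
    have := congrArg (Units.coeHom K) hveq
    simpa [map_prod, ht, hgu] using this
  have hbeqK : (∏ i, t i ^ (b i : ℕ)) = algebraMap F K h * ∏ i, t i ^ (c i : ℕ) := by
    have := congrArg (Units.coeHom K) hbeq
    simpa [map_prod, ht, hhu] using this
  refine span_ne_top_aux t _ _ ?_ ?_
  · rw [map_sub, map_mul, aeval_monomial, aeval_monomial, Finsupp.prod_pow, Finsupp.prod_pow,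
      aeval_C, map_one, one_mul, one_mul, hveqK]
    ring
  · rw [map_sub, map_mul, aeval_monomial, aeval_monomial, Finsupp.prod_pow, Finsupp.prod_pow,
      aeval_C, map_one, one_mul, one_mul, hbeqK]
    ring


theorem stmt3 {F : Type*} [Field F] (n : ℕ) (g h : F) (hg : IsUnit g) (hh : IsUnit h)
    (v w b c : Fin n →₀ ℕ)
    (hvw : ∀ i, min (v i) (w i) = 0) (hbc : ∀ i, min (b i) (c i) = 0)
    (hv : grevlexLt w v) (hb : grevlexLt c b)
    (hR : Ideal.span {(monomial v (1 : F)) - MvPolynomial.C g * monomial w 1,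
        (monomial b (1 : F)) - MvPolynomial.C h * monomial c 1} = ⊤) :
    w = 0 ∧ c = 0 ∧ ∃ l : ℚ, 0 < l ∧ ∀ i, (v i : ℚ) = l * (b i : ℚ) := by
  classical
  have hg0 : g ≠ 0 := hg.ne_zero
  have hh0 : h ≠ 0 := hh.ne_zero
  have hv' : (∑ i, w i) < (∑ i, v i) ∨ ((∑ i, w i) = (∑ i, v i) ∧
      ∃ i, v i < w i ∧ ∀ j, i < j → w j = v j) := hv
  have hb' : (∑ i, c i) < (∑ i, b i) ∨ ((∑ i, c i) = (∑ i, b i) ∧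
      ∃ i, b i < c i ∧ ∀ j, i < j → c j = b j) := hb
  have hswv : ∑ j, w j ≤ ∑ j, v j := by rcases hv' with h' | ⟨h', _⟩; exacts [h'.le, h'.le]
  have hscb : ∑ j, c j ≤ ∑ j, b j := by rcases hb' with h' | ⟨h', _⟩; exacts [h'.le, h'.le]
  have hUne : ∃ i, v i ≠ w i := by
    rcases hv' with h' | ⟨_, i, hi, _⟩
    · by_contra hc
      push_neg at hc
      have : ∑ j, w j = ∑ j, v j := Finset.sum_congr rfl fun j _ => (hc j).symm
      omega
    · exact ⟨i, by omega⟩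
  have hBne : ∃ i, b i ≠ c i := by
    rcases hb' with h' | ⟨_, i, hi, _⟩
    · by_contra hc
      push_neg at hc
      have : ∑ j, c j = ∑ j, b j := Finset.sum_congr rfl fun j _ => (hc j).symm
      omega
    · exact ⟨i, by omega⟩
  by_cases hInd : ∀ s t : ℚ, (∀ i, s * ((v i:ℚ) - w i) + t * ((b i:ℚ) - c i) = 0) → s = 0 ∧ t = 0
  · obtain ⟨p, q, h1, h2, h3, h4⟩ :=
      exists_dual_aux (fun i => (v i:ℚ) - w i) (fun i => (b i:ℚ) - c i) hInd
    exact absurd hR (indep_case_aux g h hg0 hh0 v w b c p q h1 h2 h3 h4)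
  · push_neg at hInd
    obtain ⟨s, t, hst, hne⟩ := hInd
    have ht0 : t ≠ 0 := by
      rintro rfl
      obtain ⟨i, hi⟩ := hUne
      have hUi : ((v i:ℚ) - w i) ≠ 0 := fun hcc => hi (by exact_mod_cast sub_eq_zero.mp hcc)
      have hs0 : s ≠ 0 := fun hcc => hne hcc rfl
      have h' : s * ((v i:ℚ) - w i) = 0 := by simpa using hst i
      rcases mul_eq_zero.mp h' with h'' | h''
      exacts [hs0 h'', hUi h'']
    have hs0' : s ≠ 0 := by
      rintro rfl
      obtain ⟨i, hi⟩ := hBne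
      have hDi : ((b i:ℚ) - c i) ≠ 0 := fun hcc => hi (by exact_mod_cast sub_eq_zero.mp hcc)
      have h' : t * ((b i:ℚ) - c i) = 0 := by simpa using hst i
      rcases mul_eq_zero.mp h' with h'' | h''
      exacts [ht0 h'', hDi h'']
    set m : ℚ := -s / t with hm
    have hmD : ∀ i, ((b i:ℚ) - c i) = m * ((v i:ℚ) - w i) := by
      intro i
      have h' := hst i
      rw [hm]
      field_simp
      linear_combination h'
    have hm0 : m ≠ 0 := div_ne_zero (neg_ne_zero.mpr hs0') ht0
    have hsum : (∑ i, ((b i:ℚ) - c i)) = m * ∑ i, ((v i:ℚ) - w i) := by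
      rw [Finset.mul_sum]
      exact Finset.sum_congr rfl fun i _ => hmD i
    have hSU : (0:ℚ) ≤ ∑ i, ((v i:ℚ) - w i) := by
      rw [Finset.sum_sub_distrib]
      have h' : ((∑ i, w i : ℕ) : ℚ) ≤ ((∑ i, v i : ℕ) : ℚ) := by exact_mod_cast hswv
      push_cast at h'
      linarith
    have hSD : (0:ℚ) ≤ ∑ i, ((b i:ℚ) - c i) := by
      rw [Finset.sum_sub_distrib]
      have h' : ((∑ i, c i : ℕ) : ℚ) ≤ ((∑ i, b i : ℕ) : ℚ) := by exact_mod_cast hscb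
      push_cast at h'
      linarith
    rcases lt_trichotomy m 0 with hmneg | hmz | hmpos
    · exfalso
      have hU0 : ∑ i, ((v i:ℚ) - w i) = 0 := by
        by_contra hc
        have hpos : 0 < ∑ i, ((v i:ℚ) - w i) := lt_of_le_of_ne hSU (Ne.symm hc)
        have := mul_neg_of_neg_of_pos hmneg hpos
        linarith
      have hD0 : ∑ i, ((b i:ℚ) - c i) = 0 := by rw [hsum, hU0, mul_zero]
      have hvwsum : ∑ j, w j = ∑ j, v j := by
        rw [Finset.sum_sub_distrib] at hU0
        have h' : ((∑ j, v j : ℕ):ℚ) = ((∑ j, w j : ℕ):ℚ) := by push_cast; linarith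
        exact_mod_cast h'.symm
      have hbcsum : ∑ j, c j = ∑ j, b j := by
        rw [Finset.sum_sub_distrib] at hD0
        have h' : ((∑ j, b j : ℕ):ℚ) = ((∑ j, c j : ℕ):ℚ) := by push_cast; linarith
        exact_mod_cast h'.symm
      rcases hv' with h' | ⟨_, i, hiv, hjv⟩
      · omega
      rcases hb' with h' | ⟨_, k, hkb, hjb⟩
      · omega
      have hUi : ((v i:ℚ) - w i) < 0 := by
        have : (v i:ℚ) < w i := by exact_mod_cast hiv
        linarith
      have hDi : 0 < ((b i:ℚ) - c i) := by
        rw [hmD i]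
        exact mul_pos_of_neg_of_neg hmneg hUi
      have hDk : ((b k:ℚ) - c k) < 0 := by
        have : (b k:ℚ) < c k := by exact_mod_cast hkb
        linarith
      rcases lt_trichotomy i k with hik | rfl | hki
      · have hwk : w k = v k := hjv k hik
        have : ((b k:ℚ) - c k) = 0 := by
          rw [hmD k, show ((v k:ℚ) - w k) = 0 from by rw [hwk]; ring, mul_zero]
        linarith
      · linarith
      · have hci : c i = b i := hjb i hki
        have : ((b i:ℚ) - c i) = 0 := by rw [hci]; ring
        linarith
    · exact absurd hmz hm0
    · have hw0 : w = 0 := by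
        by_contra hwne
        obtain ⟨i, hi⟩ := Finsupp.ne_iff.mp hwne
        simp only [Finsupp.coe_zero, Pi.zero_apply] at hi
        have hvi : v i = 0 := by have := hvw i; omega
        have hUi : ((v i:ℚ) - w i) < 0 := by
          have h1 : (1:ℚ) ≤ w i := by exact_mod_cast Nat.one_le_iff_ne_zero.mpr hi
          rw [hvi]
          push_cast
          linarith
        have hDi : ((b i:ℚ) - c i) < 0 := by
          rw [hmD i]
          exact mul_neg_of_pos_of_neg hmpos hUi
        have hci : c i ≠ 0 := by
          intro hc0
          rw [hc0] at hDi
          push_cast at hDi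
          have : (0:ℚ) ≤ (b i:ℚ) := by positivity
          linarith
        have hwge : 1 ≤ ∑ j, w j :=
          le_trans (Nat.one_le_iff_ne_zero.mpr hi)
            (Finset.single_le_sum (fun j _ => Nat.zero_le _) (Finset.mem_univ i))
        have hcge : 1 ≤ ∑ j, c j :=
          le_trans (Nat.one_le_iff_ne_zero.mpr hci)
            (Finset.single_le_sum (fun j _ => Nat.zero_le _) (Finset.mem_univ i))
        obtain ⟨j1, hj1⟩ : ∃ j, v j ≠ 0 := by
          by_contra hcv
          push_neg at hcv
          have : ∑ j, v j = 0 := Finset.sum_eq_zero fun j _ => hcv j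
          omega
        obtain ⟨j2, hj2⟩ : ∃ j, b j ≠ 0 := by
          by_contra hcv
          push_neg at hcv
          have : ∑ j, b j = 0 := Finset.sum_eq_zero fun j _ => hcv j
          omega
        refine absurd hR (span_ne_top_aux (fun _ => (0:F)) _ _ ?_ ?_)
        · have hz1 : (∏ j, (0:F) ^ v j) = 0 :=
            Finset.prod_eq_zero (Finset.mem_univ j1) (zero_pow hj1)
          have hz2 : (∏ j, (0:F) ^ w j) = 0 :=
            Finset.prod_eq_zero (Finset.mem_univ i) (zero_pow hi)
          rw [map_sub, map_mul, aeval_monomial, aeval_monomial, Finsupp.prod_pow,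
            Finsupp.prod_pow, hz1, hz2]
          simp
        · have hz1 : (∏ j, (0:F) ^ b j) = 0 :=
            Finset.prod_eq_zero (Finset.mem_univ j2) (zero_pow hj2)
          have hz2 : (∏ j, (0:F) ^ c j) = 0 :=
            Finset.prod_eq_zero (Finset.mem_univ i) (zero_pow hci)
          rw [map_sub, map_mul, aeval_monomial, aeval_monomial, Finsupp.prod_pow,
            Finsupp.prod_pow, hz1, hz2]
          simp
      have hc0 : c = 0 := by
        apply Finsupp.ext
        intro i
        simp only [Finsupp.coe_zero, Pi.zero_apply]
        by_contra hci
        have hbi : b i = 0 := by have := hbc i; omega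
        have hDi : ((b i:ℚ) - c i) < 0 := by
          have h1 : (1:ℚ) ≤ c i := by exact_mod_cast Nat.one_le_iff_ne_zero.mpr hci
          rw [hbi]
          push_cast
          linarith
        have hwi : w i = 0 := by rw [hw0]; rfl
        have hUi : (0:ℚ) ≤ ((v i:ℚ) - w i) := by
          have hvi : (0:ℚ) ≤ (v i:ℚ) := by positivity
          rw [hwi]
          push_cast
          linarith
        have hD := hmD i
        have hmm : (0:ℚ) ≤ m * ((v i:ℚ) - (w i : ℚ)) := mul_nonneg hmpos.le hUi
        linarith
      refine ⟨hw0, hc0, 1/m, one_div_pos.mpr hmpos, ?_⟩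
      intro i
      have hD := hmD i
      have hwi : w i = 0 := by rw [hw0]; rfl
      have hci : c i = 0 := by rw [hc0]; rfl
      rw [hwi, hci] at hD
      push_cast at hD
      have hD' : (b i:ℚ) = m * v i := by linarith
      rw [hD', ← mul_assoc, one_div, inv_mul_cancel₀ hm0, one_mul]
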